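/- Let t be a term of some minor of the generic matrix X, represented by its two-row array ((i_1,...,i_r),(j_1,...,j_r)) with i_1 < ... < i_r, and let B be an anti-diagonal subset of X whose minors under consideration have size r̃. Then there exists an r̃×r̃ minor m contained in B such that the anti-diagonal leading term of m divides t if and only if the anti-diagonal length of t in B (the length of the longest strictly decreasing subsequence of the column indices of the entries of t lying in B) is at least r̃. -/
import Mathlib


/-- A subset `B` of the entries of a generic `m × n` matrix is anti-diagonal: whenever
the north-east and south-west corners of a submatrix lie in `B`, all of its entries do. -/
def AntiDiagSubset (m n : ℕ) (B : Set (Fin m × Fin n)) : Prop :=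
  ∀ p pt : Fin m, ∀ q qt : Fin n, (p, q) ∈ B → (pt, qt) ∈ B → pt ≤ p → q ≤ qt →
    ∀ i : Fin m, ∀ j : Fin n, pt ≤ i → i ≤ p → q ≤ j → j ≤ qt → (i, j) ∈ B

/-- For a term `t` of a minor (given by `x_{i₁j₁} ⋯ x_{i_r j_r}` with
`i₁ < ⋯ < i_r` and distinct columns) and an anti-diagonal subset `B`, there exists a
`r̃ × r̃` minor inside `B` whose anti-diagonal leading term divides `t` iff the
anti-diagonal length of `t` in `B` is at least `r̃`, i.e. there is a strictly
decreasing subsequence of length `r̃` of the column indices of the entries of `t`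
lying in `B`. -/
theorem stmt_2 (m n r rt : ℕ) (B : Set (Fin m × Fin n)) (hB : AntiDiagSubset m n B)
    (i : Fin r → Fin m) (j : Fin r → Fin n) (hi : StrictMono i) (hj : Function.Injective j) :
    (∃ (a : Fin rt → Fin m) (b : Fin rt → Fin n), StrictMono a ∧ StrictMono b ∧
        (∀ k l : Fin rt, (a k, b l) ∈ B) ∧
        (∑ k : Fin rt, Finsupp.single (a k, b k.rev) 1 : (Fin m × Fin n) →₀ ℕ) ≤
          ∑ k : Fin r, Finsupp.single (i k, j k) 1) ↔
      ∃ φ : Fin rt → Fin r, StrictMono φ ∧ (∀ k, (i (φ k), j (φ k)) ∈ B) ∧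
        StrictAnti fun k => j (φ k) := by
  constructor
  · rintro ⟨a, b, ha, hb, hab, hle⟩
    have key : ∀ k : Fin rt, ∃ k' : Fin r, (i k', j k') = (a k, b k.rev) := by
      intro k
      set p0 : Fin m × Fin n := (a k, b k.rev) with hp0
      have h1 : (1 : ℕ) ≤
          (∑ k : Fin rt, Finsupp.single (a k, b k.rev) (1 : ℕ) :
            (Fin m × Fin n) →₀ ℕ) p0 := by
        rw [Finsupp.finset_sum_apply]
        calc (1 : ℕ) = (Finsupp.single (a k, b k.rev) (1 : ℕ)) p0 := by
              simp [hp0]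
          _ ≤ _ := Finset.single_le_sum
              (f := fun k' : Fin rt =>
                (Finsupp.single (a k', b k'.rev) (1 : ℕ) : (Fin m × Fin n) →₀ ℕ) p0)
              (fun _ _ => Nat.zero_le _) (Finset.mem_univ k)
      have h2 : (1 : ℕ) ≤
          (∑ k' : Fin r, Finsupp.single (i k', j k') (1 : ℕ) :
            (Fin m × Fin n) →₀ ℕ) p0 := le_trans h1 (hle p0)
      rw [Finsupp.finset_sum_apply] at h2
      have h3 : ∑ k' : Fin r,
          ((Finsupp.single (i k', j k') (1 : ℕ) : (Fin m × Fin n) →₀ ℕ) p0) ≠ 0 := by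
        omega
      obtain ⟨k', _, hk'⟩ := Finset.exists_ne_zero_of_sum_ne_zero h3
      refine ⟨k', ?_⟩
      by_contra hne
      exact hk' (by simp [Finsupp.single_apply, hne])
    choose φ hφ using key
    have hφi : ∀ k, i (φ k) = a k := fun k => congrArg Prod.fst (hφ k)
    have hφj : ∀ k, j (φ k) = b k.rev := fun k => congrArg Prod.snd (hφ k)
    refine ⟨φ, ?_, ?_, ?_⟩
    · intro k l hkl
      have : i (φ k) < i (φ l) := by rw [hφi, hφi]; exact ha hkl
      exact hi.lt_iff_lt.mp this
    · intro k; rw [hφ k]; exact hab k k.rev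
    · intro k l hkl
      show j (φ l) < j (φ k)
      rw [hφj, hφj]
      exact hb (Fin.rev_lt_rev.mpr hkl)
  · rintro ⟨φ, hφ, hφB, hφj⟩
    refine ⟨fun k => i (φ k), fun k => j (φ k.rev), hi.comp hφ, ?_, ?_, ?_⟩
    · intro k l hkl
      exact hφj (Fin.rev_lt_rev.mpr hkl)
    · intro k l
      rcases le_total k l.rev with h | h
      · exact hB (i (φ l.rev)) (i (φ k)) (j (φ l.rev)) (j (φ k))
          (hφB l.rev) (hφB k) ((hi.comp hφ).monotone h) (hφj.antitone h)
          (i (φ k)) (j (φ l.rev)) le_rfl ((hi.comp hφ).monotone h)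
          le_rfl (hφj.antitone h)
      · exact hB (i (φ k)) (i (φ l.rev)) (j (φ k)) (j (φ l.rev))
          (hφB k) (hφB l.rev) ((hi.comp hφ).monotone h) (hφj.antitone h)
          (i (φ k)) (j (φ l.rev)) ((hi.comp hφ).monotone h) le_rfl
          (hφj.antitone h) le_rfl
    · have heq : (∑ k : Fin rt,
          Finsupp.single (i (φ k), j (φ (Fin.rev k).rev)) (1 : ℕ) :
            (Fin m × Fin n) →₀ ℕ) =
          ∑ k' ∈ Finset.image φ Finset.univ, Finsupp.single (i k', j k') (1 : ℕ) := by
        rw [Finset.sum_image (fun x _ y _ h => hφ.injective h)]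
        simp [Fin.rev_rev]
      rw [heq]
      exact Finset.sum_le_sum_of_subset (Finset.subset_univ _)
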